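/- For every list a of length L ≥ 1 of positive integers, the canonical decoded forest decode(a) has exactly L+1 leaves, and the separation array of decode(a) equals a. (Encoding after decoding is the identity; this establishes the correctness of the decoding construction used in the proof of Theorem 1(2).) -/

import Mathlib

/-- A rooted plane tree: a node carrying a finite ordered list of child subtrees.
A node with no children is a leaf. -/
inductive PTree : Type where
  | node : List PTree → PTree

namespace PTree

mutual
/-- Number of leaves of a plane tree. -/
def leaves : PTree → ℕ
  | .node [] => 1
  | .node (c :: cs) => c.leaves + leavesList cs

/-- Total number of leaves of a list of plane trees. -/
def leavesList : List PTree → ℕ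
  | [] => 0
  | c :: cs => c.leaves + leavesList cs
end

mutual
/-- Height of a plane tree (a single leaf has height 1). -/
def height : PTree → ℕ
  | .node [] => 1
  | .node (c :: cs) => 1 + max c.height (heightList cs)

/-- Maximum height among a list of plane trees (0 for the empty list). -/
def heightList : List PTree → ℕ
  | [] => 0
  | c :: cs => max c.height (heightList cs)
end

mutual
/-- Separation levels between consecutive leaves inside a tree whose root is at level `l`:
between two consecutive leaves lying in distinct children we record `l+1`
(one more than the level of their lowest common ancestor, which is the root). -/
def enc : PTree → ℕ → List ℕ
  | .node [], _ => []
  | .node (c :: cs), l => c.enc (l + 1) ++ encList cs (l + 1)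

/-- Separation levels for a list of sibling subtrees all at level `l`, including
the separator `l` between consecutive subtrees. -/
def encList : List PTree → ℕ → List ℕ
  | [], _ => []
  | c :: cs, l => (l :: c.enc l) ++ encList cs l
end

end PTree

/-- Total number of leaves of a plane forest. -/
def forestLeaves (F : List PTree) : ℕ := PTree.leavesList F

/-- Height of a plane forest: the maximum level of any of its nodes (roots are at level 1). -/
def forestHeight (F : List PTree) : ℕ := PTree.heightList F

/-- The separation array of a plane forest: for each pair of consecutive leaves
(numbered left to right), the level at which they separate (`1` if they lie in
different trees, and `1 +` the level of their lowest common ancestor otherwise). -/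
def forestSep : List PTree → List ℕ
  | [] => []
  | t :: ts => t.enc 1 ++ PTree.encList ts 1

/-- Maximum entry of a list of naturals (`0` for the empty list). -/
def listMax (a : List ℕ) : ℕ := a.foldr max 0

/-- Split a list at the positions of entries equal to `v`, producing the list of the
(possibly empty) segments delimited by those entries; a list containing `k` occurrences
of `v` yields `k + 1` segments, in left-to-right order. -/
def splitSep (v : ℕ) : List ℕ → List (List ℕ)
  | [] => [[]]
  | x :: xs =>
    match splitSep v xs with
    | [] => [[]]
    | r :: rs => if x = v then [] :: r :: rs else (x :: r) :: rs

theorem splitSep_ne_nil (v : ℕ) (s : List ℕ) : splitSep v s ≠ [] := by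
  cases s with
  | nil => simp [splitSep]
  | cons x xs =>
    simp only [splitSep]
    cases h : splitSep v xs with
    | nil => simp
    | cons r rs => by_cases hxv : x = v <;> simp [hxv]

theorem listMax_le_of_mem_splitSep {v : ℕ} {s s' : List ℕ} (h : s' ∈ splitSep v s) :
    listMax s' ≤ listMax s := by
  induction s generalizing s' with
  | nil =>
    simp only [splitSep, List.mem_singleton] at h
    subst h; exact le_rfl
  | cons x xs ih =>
    simp only [splitSep] at h
    cases hs : splitSep v xs with
    | nil => exact absurd hs (splitSep_ne_nil v xs)
    | cons r rs =>
      rw [hs] at h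
      have hr : r ∈ splitSep v xs := by rw [hs]; exact List.mem_cons_self
      by_cases hxv : x = v
      · simp only [if_pos hxv, List.mem_cons] at h
        rcases h with h | h | h
        · subst h; simp [listMax]
        · subst h
          exact le_trans (ih hr) (by simp [listMax, le_max_iff, le_refl, or_true])
        · have : s' ∈ splitSep v xs := by rw [hs]; exact List.mem_cons_of_mem _ h
          exact le_trans (ih this) (by simp [listMax, le_max_iff, le_refl, or_true])
      · simp only [if_neg hxv, List.mem_cons] at h
        rcases h with h | h
        · subst h
          have := ih hr
          simp only [listMax, List.foldr] at *
          omega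
        · have : s' ∈ splitSep v xs := by rw [hs]; exact List.mem_cons_of_mem _ h
          have := ih this
          simp only [listMax, List.foldr] at *
          omega

/-- The canonical decoding `T(s, l)` of a list `s` (all of whose entries are intended to
be strictly greater than `l`) into a plane tree rooted at level `l`: the empty list
decodes to a single leaf, and otherwise the children are obtained by decoding, at level
`l + 1`, the segments of `s` delimited by the entries equal to `l + 1`. -/
def decodeT (s : List ℕ) (l : ℕ) : PTree :=
  if h : s = [] ∨ listMax s ≤ l then .node []
  else .node ((splitSep (l + 1) s).attach.map (fun x => decodeT x.1 (l + 1)))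
termination_by listMax s + 1 - l
decreasing_by
  have h1 : listMax x.1 ≤ listMax s := listMax_le_of_mem_splitSep x.2
  push_neg at h
  omega

/-- The canonical decoded forest of a list `a`: decode, as trees rooted at level `1`,
the segments of `a` delimited by the entries equal to `1`. -/
def decode (a : List ℕ) : List PTree := (splitSep 1 a).map (fun s => decodeT s 1)

theorem le_listMax {x : ℕ} {s : List ℕ} (h : x ∈ s) : x ≤ listMax s := by
  induction s with
  | nil => simp at h
  | cons y ys ih =>
    rcases List.mem_cons.1 h with h | h
    · subst h; simp [listMax]
    · exact le_trans (ih h) (by simp [listMax, le_max_iff, le_refl, or_true])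

theorem mem_of_mem_splitSep {v x : ℕ} {s s' : List ℕ} (hs' : s' ∈ splitSep v s)
    (hx : x ∈ s') : x ∈ s ∧ x ≠ v := by
  induction s generalizing s' with
  | nil =>
    simp only [splitSep, List.mem_singleton] at hs'
    subst hs'; simp at hx
  | cons y ys ih =>
    simp only [splitSep] at hs'
    cases hs : splitSep v ys with
    | nil => exact absurd hs (splitSep_ne_nil v ys)
    | cons r rs =>
      rw [hs] at hs'
      by_cases hyv : y = v
      · simp only [if_pos hyv, List.mem_cons] at hs'
        rcases hs' with h | h
        · subst h; simp at hx
        · have : s' ∈ splitSep v ys := by rw [hs]; exact List.mem_cons.2 h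
          have := ih this hx
          exact ⟨List.mem_cons_of_mem _ this.1, this.2⟩
      · simp only [if_neg hyv, List.mem_cons] at hs'
        rcases hs' with h | h
        · subst h
          rcases List.mem_cons.1 hx with h | h
          · subst h; exact ⟨List.mem_cons_self, hyv⟩
          · have hr : r ∈ splitSep v ys := by rw [hs]; exact List.mem_cons_self
            have := ih hr h
            exact ⟨List.mem_cons_of_mem _ this.1, this.2⟩
        · have : s' ∈ splitSep v ys := by rw [hs]; exact List.mem_cons_of_mem _ h
          have := ih this hx
          exact ⟨List.mem_cons_of_mem _ this.1, this.2⟩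

/-- Join a nonempty list of segments with separator `v`. -/
def joinSep (v : ℕ) : List (List ℕ) → List ℕ
  | [] => []
  | r :: rs => r ++ rs.flatMap (fun t => v :: t)

theorem joinSep_splitSep (v : ℕ) (s : List ℕ) : joinSep v (splitSep v s) = s := by
  induction s with
  | nil => simp [splitSep, joinSep]
  | cons x xs ih =>
    simp only [splitSep]
    cases hs : splitSep v xs with
    | nil => exact absurd hs (splitSep_ne_nil v xs)
    | cons r rs =>
      rw [hs] at ih
      by_cases hxv : x = v
      · subst hxv
        simp only [if_pos rfl, joinSep, List.flatMap_cons, List.nil_append]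
        simpa [joinSep] using congrArg (List.cons x) ih
      · simp only [if_neg hxv, joinSep, List.cons_append]
        simpa [joinSep] using congrArg (List.cons x) ih

theorem joinSep_length (v : ℕ) (r : List ℕ) (rs : List (List ℕ)) :
    ((r :: rs).map (fun t => t.length + 1)).sum = (joinSep v (r :: rs)).length + 1 := by
  have : (rs.flatMap (fun t => v :: t)).length = (rs.map (fun t => t.length + 1)).sum := by
    induction rs with
    | nil => simp
    | cons r' rs' ih => simp [List.flatMap_cons, ih]; omega
  simp only [joinSep, List.map_cons, List.sum_cons, List.length_append]
  omega

theorem leavesList_eq (ts : List PTree) :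
    PTree.leavesList ts = (ts.map PTree.leaves).sum := by
  induction ts with
  | nil => simp [PTree.leavesList]
  | cons t ts ih => simp [PTree.leavesList, ih]

theorem encList_eq (ts : List PTree) (l : ℕ) :
    PTree.encList ts l = ts.flatMap (fun t => l :: t.enc l) := by
  induction ts with
  | nil => simp [PTree.encList]
  | cons t ts ih => simp [PTree.encList, ih]

theorem decodeT_spec (s : List ℕ) (l : ℕ) (h : ∀ x ∈ s, l < x) :
    (decodeT s l).leaves = s.length + 1 ∧ (decodeT s l).enc l = s := by
  by_cases hc : s = [] ∨ listMax s ≤ l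
  · have hs : s = [] := by
      rcases hc with h0 | h0
      · exact h0
      · cases s with
        | nil => rfl
        | cons x xs =>
          exact absurd (le_trans (le_listMax (show x ∈ x :: xs from List.mem_cons_self)) h0)
            (not_le.2 (h x (show x ∈ x :: xs from List.mem_cons_self)))
    subst hs
    rw [decodeT, dif_pos (Or.inl rfl)]
    simp [PTree.leaves, PTree.enc]
  · rw [decodeT, dif_neg hc]
    have hmap : (splitSep (l + 1) s).attach.map (fun x => decodeT x.1 (l + 1)) =
        (splitSep (l + 1) s).map (fun r => decodeT r (l + 1)) := by
      simp
    rw [hmap]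
    have IH : ∀ r ∈ splitSep (l + 1) s,
        (decodeT r (l + 1)).leaves = r.length + 1 ∧
        (decodeT r (l + 1)).enc (l + 1) = r := by
      intro r hr
      exact decodeT_spec r (l + 1) (fun x hx => by
        have := mem_of_mem_splitSep hr hx
        have := h x this.1
        have hne := (mem_of_mem_splitSep hr hx).2
        omega)
    cases hsplit : splitSep (l + 1) s with
    | nil => exact absurd hsplit (splitSep_ne_nil _ s)
    | cons r rs =>
      rw [hsplit] at IH
      have hjoin : joinSep (l + 1) (r :: rs) = s := by
        rw [← hsplit]; exact joinSep_splitSep _ s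
      constructor
      · show PTree.leaves (.node (decodeT r (l+1) :: rs.map (fun t => decodeT t (l+1)))) = _
        rw [PTree.leaves, leavesList_eq, (IH r (List.mem_cons_self)).1]
        have hmap2 : (rs.map (fun t => decodeT t (l+1))).map PTree.leaves =
            rs.map (fun t => t.length + 1) := by
          rw [List.map_map]
          refine List.map_congr_left ?_
          intro t ht
          exact (IH t (List.mem_cons_of_mem _ ht)).1
        rw [hmap2]
        have := joinSep_length (l + 1) r rs
        rw [hjoin] at this
        simp only [List.map_cons, List.sum_cons] at this
        omega
      · show PTree.enc (.node (decodeT r (l+1) :: rs.map (fun t => decodeT t (l+1)))) l = _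
        rw [PTree.enc, (IH r (List.mem_cons_self)).2, encList_eq]
        have : (rs.map (fun t => decodeT t (l+1))).flatMap
            (fun t => (l + 1) :: t.enc (l + 1)) = rs.flatMap (fun t => (l + 1) :: t) := by
          rw [List.flatMap_map]
          refine List.flatMap_congr ?_
          intro t ht
          rw [(IH t (List.mem_cons_of_mem _ ht)).2]
        rw [this, ← hjoin]
        rfl
termination_by listMax s + 1 - l
decreasing_by
  have h1 : listMax r ≤ listMax s := listMax_le_of_mem_splitSep hr
  push_neg at hc
  obtain ⟨hne, hlt⟩ := hc
  omega

/-- For every list `a` of length `L ≥ 1` of positive integers, the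
canonical decoded forest `decode a` has exactly `L + 1` leaves, and the separation array
of `decode a` equals `a` (encoding after decoding is the identity). -/
theorem decode_leaves_and_sepArray (a : List ℕ) (hlen : 1 ≤ a.length)
    (hpos : ∀ x ∈ a, 1 ≤ x) :
    forestLeaves (decode a) = a.length + 1 ∧ forestSep (decode a) = a := by
  have IH : ∀ r ∈ splitSep 1 a,
      (decodeT r 1).leaves = r.length + 1 ∧ (decodeT r 1).enc 1 = r := by
    intro r hr
    refine decodeT_spec r 1 (fun x hx => ?_)
    have h1 := mem_of_mem_splitSep hr hx
    have h2 := hpos x h1.1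
    have := h1.2
    omega
  cases hsplit : splitSep 1 a with
  | nil => exact absurd hsplit (splitSep_ne_nil _ a)
  | cons r rs =>
    rw [hsplit] at IH
    have hjoin : joinSep 1 (r :: rs) = a := by
      rw [← hsplit]; exact joinSep_splitSep _ a
    unfold decode
    rw [hsplit]
    constructor
    · show forestLeaves (decodeT r 1 :: rs.map (fun t => decodeT t 1)) = _
      unfold forestLeaves
      rw [leavesList_eq]
      simp only [List.map_cons, List.sum_cons, (IH r (List.mem_cons_self)).1]
      have hmap2 : (rs.map (fun t => decodeT t 1)).map PTree.leaves =
          rs.map (fun t => t.length + 1) := by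
        rw [List.map_map]
        refine List.map_congr_left ?_
        intro t ht
        exact (IH t (List.mem_cons_of_mem _ ht)).1
      rw [hmap2]
      have := joinSep_length 1 r rs
      rw [hjoin] at this
      simp only [List.map_cons, List.sum_cons] at this
      omega
    · show (decodeT r 1).enc 1 ++ PTree.encList (rs.map (fun t => decodeT t 1)) 1 = a
      rw [(IH r (List.mem_cons_self)).2, encList_eq]
      have : (rs.map (fun t => decodeT t 1)).flatMap (fun t => 1 :: t.enc 1) =
          rs.flatMap (fun t => 1 :: t) := by
        rw [List.flatMap_map]
        refine List.flatMap_congr ?_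
        intro t ht
        rw [(IH t (List.mem_cons_of_mem _ ht)).2]
      rw [this, ← hjoin]
      rfl
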